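/- Let η be a norm on ℝ^N, let A ⊆ ℝ^N, and for ρ ∈ ℝ define (A)^η_ρ := {x : d^η_A(x) ≤ ρ}, where d^η_A is the η-signed distance to A. Then for every r > 0, d^η_{(A)^η_r} ≤ d^η_A − r pointwise on ℝ^N. -/

import Mathlib

open Set

/-- The `η`-distance from a set. -/
noncomputable def etaDist {N : ℕ} (η : EuclideanSpace ℝ (Fin N) → ℝ)
    (A : Set (EuclideanSpace ℝ (Fin N))) (x : EuclideanSpace ℝ (Fin N)) : ℝ :=
  sInf {t | ∃ y ∈ A, t = η (x - y)}

/-- The `η`-signed distance from a set. -/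
noncomputable def etaSignedDist {N : ℕ} (η : EuclideanSpace ℝ (Fin N) → ℝ)
    (A : Set (EuclideanSpace ℝ (Fin N))) (x : EuclideanSpace ℝ (Fin N)) : ℝ :=
  etaDist η A x - etaDist η Aᶜ x

section Aux

variable {N : ℕ} {η : EuclideanSpace ℝ (Fin N) → ℝ}

lemma etaDist_nonneg (hnn : ∀ v, 0 ≤ η v) (B : Set (EuclideanSpace ℝ (Fin N)))
    (x : EuclideanSpace ℝ (Fin N)) : 0 ≤ etaDist η B x := by
  apply Real.sInf_nonneg
  rintro t ⟨y, hy, rfl⟩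
  exact hnn _

lemma etaDist_le_of_mem (hnn : ∀ v, 0 ≤ η v) {B : Set (EuclideanSpace ℝ (Fin N))}
    {x y : EuclideanSpace ℝ (Fin N)} (hy : y ∈ B) : etaDist η B x ≤ η (x - y) := by
  have hbdd : BddBelow {t | ∃ z ∈ B, t = η (x - z)} := by
    refine ⟨0, ?_⟩
    rintro t ⟨z, hz, rfl⟩
    exact hnn _
  exact csInf_le hbdd ⟨y, hy, rfl⟩

lemma etaDist_eq_zero (h0 : η 0 = 0) (hnn : ∀ v, 0 ≤ η v)
    {B : Set (EuclideanSpace ℝ (Fin N))} {x : EuclideanSpace ℝ (Fin N)} (hx : x ∈ B) :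
    etaDist η B x = 0 := by
  refine le_antisymm ?_ (etaDist_nonneg hnn B x)
  have := etaDist_le_of_mem (η := η) hnn (x := x) hx
  simpa [h0] using this

lemma etaDist_exists_lt {B : Set (EuclideanSpace ℝ (Fin N))} (hB : B.Nonempty)
    {x : EuclideanSpace ℝ (Fin N)} {c : ℝ} (h : etaDist η B x < c) :
    ∃ y ∈ B, η (x - y) < c := by
  obtain ⟨w, hw⟩ := hB
  have hne : {t | ∃ z ∈ B, t = η (x - z)}.Nonempty := ⟨η (x - w), w, hw, rfl⟩
  obtain ⟨t, ⟨y, hy, rfl⟩, ht⟩ := exists_lt_of_csInf_lt hne h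
  exact ⟨y, hy, ht⟩

lemma etaDist_lip (hnn : ∀ v, 0 ≤ η v) (htri : ∀ a b, η (a + b) ≤ η a + η b)
    {B : Set (EuclideanSpace ℝ (Fin N))} (hB : B.Nonempty)
    (x y : EuclideanSpace ℝ (Fin N)) :
    etaDist η B x ≤ etaDist η B y + η (x - y) := by
  rw [← sub_le_iff_le_add]
  obtain ⟨w, hw⟩ := hB
  have hne : {t | ∃ z ∈ B, t = η (y - z)}.Nonempty := ⟨η (y - w), w, hw, rfl⟩
  apply le_csInf hne
  rintro t ⟨z, hz, rfl⟩
  have h1 : etaDist η B x ≤ η (x - z) := etaDist_le_of_mem hnn hz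
  have h2 : η (x - z) ≤ η (x - y) + η (y - z) := by
    have := htri (x - y) (y - z)
    simpa using this
  linarith

/-- The key "segment crossing" estimate: if `x ∈ B` and `y ∉ B` then
`dist(y,B) + dist(x,Bᶜ) ≤ η (x - y)`. -/
lemma etaDist_mixed (h0 : η 0 = 0) (hnn : ∀ v, 0 ≤ η v)
    (heven : ∀ v, η (-v) = η v)
    (hhom : ∀ (c : ℝ), 0 ≤ c → ∀ v, η (c • v) = c * η v)
    {B : Set (EuclideanSpace ℝ (Fin N))} {x y : EuclideanSpace ℝ (Fin N)}
    (hx : x ∈ B) (hy : y ∈ Bᶜ) :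
    etaDist η B y + etaDist η Bᶜ x ≤ η (x - y) := by
  set c : ℝ := η (x - y) with hc
  have hcnn : 0 ≤ c := hnn _
  set T : Set ℝ := {t | t ∈ Icc (0:ℝ) 1 ∧ x + t • (y - x) ∈ B} with hT
  have hT0 : (0:ℝ) ∈ T := by
    refine ⟨⟨le_rfl, zero_le_one⟩, ?_⟩
    simpa using hx
  have hTne : T.Nonempty := ⟨0, hT0⟩
  have hTbdd : BddAbove T := ⟨1, fun t ht => ht.1.2⟩
  set s : ℝ := sSup T with hs
  have hs0 : 0 ≤ s := le_csSup hTbdd hT0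
  have hs1 : s ≤ 1 := csSup_le hTne (fun t ht => ht.1.2)
  -- For every δ > 0 we get the estimate with slack 2δc
  have key : ∀ δ : ℝ, 0 < δ → etaDist η B y + etaDist η Bᶜ x ≤ c + 2 * δ * c := by
    intro δ hδ
    -- part 1: a point of B at parameter t > s - δ
    obtain ⟨t, htT, htgt⟩ := exists_lt_of_lt_csSup hTne (by linarith : s - δ < s)
    have ht01 := htT.1
    have hzB : x + t • (y - x) ∈ B := htT.2
    have hyz : y - (x + t • (y - x)) = (1 - t) • (y - x) := by module
    have h1 : etaDist η B y ≤ (1 - t) * c := by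
      have := etaDist_le_of_mem (η := η) hnn (x := y) hzB
      rw [hyz, hhom (1 - t) (by linarith [ht01.2]) (y - x)] at this
      have hee : η (y - x) = c := by
        rw [hc, ← heven (x - y)]; congr 1; abel
      rw [hee] at this
      exact this
    -- part 2: a point of Bᶜ at parameter t' ≤ s + δ
    set t' : ℝ := min (s + δ) 1 with ht'
    have ht'0 : 0 ≤ t' := le_min (by linarith) zero_le_one
    have ht'1 : t' ≤ 1 := min_le_right _ _
    have hz'Bc : x + t' • (y - x) ∈ Bᶜ := by
      rcases le_or_gt (s + δ) 1 with hle | hlt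
      · have ht'eq : t' = s + δ := min_eq_left hle
        intro hmem
        have : t' ∈ T := ⟨⟨ht'0, ht'1⟩, hmem⟩
        have := le_csSup hTbdd this
        rw [ht'eq] at this
        linarith
      · have ht'eq : t' = 1 := min_eq_right hlt.le
        rw [ht'eq]
        have : x + (1:ℝ) • (y - x) = y := by module
        rw [this]; exact hy
    have hxz' : x - (x + t' • (y - x)) = t' • (x - y) := by module
    have h2 : etaDist η Bᶜ x ≤ (s + δ) * c := by
      have := etaDist_le_of_mem (η := η) hnn (x := x) hz'Bc
      rw [hxz', hhom t' ht'0 (x - y)] at this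
      calc etaDist η Bᶜ x ≤ t' * c := this
        _ ≤ (s + δ) * c := by
            apply mul_le_mul_of_nonneg_right (min_le_left _ _) hcnn
    have hcomb : etaDist η B y + etaDist η Bᶜ x ≤ (1 - t) * c + (s + δ) * c :=
      add_le_add h1 h2
    have h3 : (1 - t) * c ≤ (1 - s + δ) * c :=
      mul_le_mul_of_nonneg_right (by linarith) hcnn
    nlinarith
  -- conclude
  refine le_of_forall_pos_le_add ?_
  intro ε hε
  rcases eq_or_lt_of_le hcnn with hc0 | hc0
  · have := key 1 one_pos
    rw [← hc0] at this ⊢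
    linarith
  · have hδ : 0 < ε / (2 * c) := by positivity
    have := key (ε / (2 * c)) hδ
    have : etaDist η B y + etaDist η Bᶜ x ≤ c + ε := by
      have h4 : 2 * (ε / (2 * c)) * c = ε := by
        field_simp
      linarith [this, h4.le, h4.ge]
    linarith

/-- The signed distance is 1-Lipschitz with respect to `η`. -/
lemma etaSignedDist_lip (h0 : η 0 = 0) (hnn : ∀ v, 0 ≤ η v)
    (heven : ∀ v, η (-v) = η v)
    (hhom : ∀ (c : ℝ), 0 ≤ c → ∀ v, η (c • v) = c * η v)
    (htri : ∀ a b, η (a + b) ≤ η a + η b)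
    {B : Set (EuclideanSpace ℝ (Fin N))} (hB : B.Nonempty) (hBc : Bᶜ.Nonempty)
    (x y : EuclideanSpace ℝ (Fin N)) :
    etaSignedDist η B y ≤ etaSignedDist η B x + η (x - y) := by
  have hsym : η (y - x) = η (x - y) := by
    rw [← heven (x - y)]; congr 1; abel
  by_cases hx : x ∈ B
  · by_cases hy : y ∈ B
    · have h1 : etaDist η B x = 0 := etaDist_eq_zero h0 hnn hx
      have h2 : etaDist η B y = 0 := etaDist_eq_zero h0 hnn hy
      have h3 : etaDist η Bᶜ x ≤ etaDist η Bᶜ y + η (x - y) := etaDist_lip hnn htri hBc x y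
      unfold etaSignedDist
      linarith
    · have hm := etaDist_mixed h0 hnn heven hhom hx (hy : y ∈ Bᶜ)
      have h1 : etaDist η B x = 0 := etaDist_eq_zero h0 hnn hx
      have h2 : etaDist η Bᶜ y = 0 := etaDist_eq_zero h0 hnn (hy : y ∈ Bᶜ)
      have h4 : 0 ≤ etaDist η B y := etaDist_nonneg hnn B y
      have h5 : 0 ≤ etaDist η Bᶜ x := etaDist_nonneg hnn Bᶜ x
      unfold etaSignedDist
      linarith
  · have h1 : etaDist η Bᶜ x = 0 := etaDist_eq_zero h0 hnn (hx : x ∈ Bᶜ)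
    have h2 : 0 ≤ etaDist η Bᶜ y := etaDist_nonneg hnn Bᶜ y
    have h3 : etaDist η B y ≤ etaDist η B x + η (y - x) := etaDist_lip hnn htri hB y x
    rw [hsym] at h3
    unfold etaSignedDist
    linarith

end Aux

/-- For a norm `η` and a closed set `A`, the `r`-enlargement
`(A)^η_r = {x : d^η_A x ≤ r}` satisfies `d^η_{(A)^η_r} ≤ d^η_A - r` pointwise. -/
theorem signedDist_enlargement {N : ℕ}
    (η : EuclideanSpace ℝ (Fin N) → ℝ)
    (hconv : ConvexOn ℝ Set.univ η)
    (heven : ∀ x, η (-x) = η x)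
    (hhom : ∀ (c : ℝ), 0 ≤ c → ∀ x, η (c • x) = c * η x)
    (hpos : ∀ x, x ≠ 0 → 0 < η x)
    (A : Set (EuclideanSpace ℝ (Fin N))) (hA : IsClosed A)
    (hAne : A.Nonempty) (hAcne : Aᶜ.Nonempty)
    (r : ℝ) (hr : 0 < r)
    (hSne : {x | etaSignedDist η A x ≤ r}.Nonempty)
    (hScne : {x | etaSignedDist η A x ≤ r}ᶜ.Nonempty) :
    ∀ x, etaSignedDist η {y | etaSignedDist η A y ≤ r} x ≤ etaSignedDist η A x - r := by
  -- basic properties of η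
  have h0 : η 0 = 0 := by
    have := hhom 0 le_rfl 0
    simpa using this
  have hnn : ∀ v, 0 ≤ η v := by
    intro v
    rcases eq_or_ne v 0 with h | h
    · rw [h, h0]
    · exact (hpos v h).le
  have htri : ∀ a b, η (a + b) ≤ η a + η b := by
    intro a b
    have h := hconv.2 (mem_univ a) (mem_univ b)
      (by norm_num : (0:ℝ) ≤ 1/2) (by norm_num : (0:ℝ) ≤ 1/2) (by norm_num)
    simp only [smul_eq_mul] at h
    have h2 := hhom 2 (by norm_num) ((1/2 : ℝ) • a + (1/2 : ℝ) • b)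
    have key : (2:ℝ) • ((1/2 : ℝ) • a + (1/2 : ℝ) • b) = a + b := by module
    rw [key] at h2
    linarith
  intro x
  set S : Set (EuclideanSpace ℝ (Fin N)) := {y | etaSignedDist η A y ≤ r} with hSdef
  by_cases hxS : etaSignedDist η A x ≤ r
  · -- x is in the enlargement
    have hxmem : x ∈ S := hxS
    have hDS : etaDist η S x = 0 := etaDist_eq_zero h0 hnn hxmem
    show etaDist η S x - etaDist η Sᶜ x ≤ etaSignedDist η A x - r
    rw [hDS]
    have : r - etaSignedDist η A x ≤ etaDist η Sᶜ x := by
      obtain ⟨w, hw⟩ := hScne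
      have hne : {t | ∃ z ∈ Sᶜ, t = η (x - z)}.Nonempty := ⟨η (x - w), w, hw, rfl⟩
      apply le_csInf hne
      rintro t ⟨y, hy, rfl⟩
      have hy' : r < etaSignedDist η A y := lt_of_not_ge hy
      have hlip := etaSignedDist_lip h0 hnn heven hhom htri hAne hAcne x y
      linarith
    linarith
  · -- x is outside the enlargement
    have hxr : r < etaSignedDist η A x := lt_of_not_ge hxS
    have hxA : x ∉ A := by
      intro hxA
      have h1 : etaDist η A x = 0 := etaDist_eq_zero h0 hnn hxA
      have h2 : 0 ≤ etaDist η Aᶜ x := etaDist_nonneg hnn Aᶜ x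
      unfold etaSignedDist at hxr
      linarith
    have hDAc : etaDist η Aᶜ x = 0 := etaDist_eq_zero h0 hnn (hxA : x ∈ Aᶜ)
    have hsd : etaSignedDist η A x = etaDist η A x := by
      unfold etaSignedDist; rw [hDAc]; ring
    have hxSc : x ∈ Sᶜ := by
      intro h
      exact hxS h
    have hDSc : etaDist η Sᶜ x = 0 := etaDist_eq_zero h0 hnn hxSc
    show etaDist η S x - etaDist η Sᶜ x ≤ etaSignedDist η A x - r
    rw [hDSc, hsd, sub_zero]
    have main : ∀ ε : ℝ, 0 < ε → etaDist η S x ≤ (etaDist η A x - r) + ε := by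
      intro ε hε
      obtain ⟨y, hyA, hyc⟩ := etaDist_exists_lt (η := η) hAne
        (show etaDist η A x < etaDist η A x + ε by linarith)
      set c : ℝ := η (x - y) with hc
      have hrc : r < c := by
        have h1 : etaDist η A x ≤ c := etaDist_le_of_mem hnn hyA
        rw [hsd] at hxr
        linarith
      have hcpos : 0 < c := lt_trans hr hrc
      set t : ℝ := 1 - r / c with ht
      have hrc1 : r / c ≤ 1 := (div_le_one hcpos).mpr hrc.le
      have hrc0 : 0 ≤ r / c := by positivity
      have ht0 : 0 ≤ t := by rw [ht]; linarith
      set z : EuclideanSpace ℝ (Fin N) := x + t • (y - x) with hz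
      have hzy : z - y = (1 - t) • (x - y) := by rw [hz]; module
      have h1t : 1 - t = r / c := by rw [ht]; ring
      have hzyd : η (z - y) = r := by
        rw [hzy, hhom (1 - t) (by rw [h1t]; exact hrc0) (x - y), ← hc, h1t]
        field_simp
      have hzS : z ∈ S := by
        show etaSignedDist η A z ≤ r
        have h1 : etaDist η A z ≤ η (z - y) := etaDist_le_of_mem hnn hyA
        have h2 : 0 ≤ etaDist η Aᶜ z := etaDist_nonneg hnn Aᶜ z
        unfold etaSignedDist
        rw [hzyd] at h1
        linarith
      have hxz : x - z = t • (x - y) := by rw [hz]; module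
      have h3 : etaDist η S x ≤ η (x - z) := etaDist_le_of_mem hnn hzS
      rw [hxz, hhom t ht0 (x - y), ← hc] at h3
      have h4 : t * c = c - r := by
        rw [ht]; field_simp
      rw [h4] at h3
      linarith
    exact le_of_forall_pos_le_add main
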